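/- arXiv:1405.5441 — 2 statements merged into one kernel-verified Lean document; each statement's English description precedes it below -/
import Mathlib

section
/- For all τ, v, u ∈ ℝ, the squared Euclidean norm of F(τ, v, u) equals e^{2τ sin v}, and the absolute value of the determinant of the Jacobian matrix (total derivative) of F at (τ, v, u) equals e^{3τ sin v} · |τ| · |sin(τ cos v)|. -/
open Real

/-- The geodesic polar parametrization `F (τ, v, u)` of `S²×R` in the projective model:
the point at geodesic distance `τ` from `(1,0,0)` along the geodesic with altitude `v`
and longitude `u`. -/
noncomputable def F (p : ℝ × ℝ × ℝ) : ℝ × ℝ × ℝ :=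
  (Real.exp (p.1 * Real.sin p.2.1) * Real.cos (p.1 * Real.cos p.2.1),
   Real.exp (p.1 * Real.sin p.2.1) * Real.sin (p.1 * Real.cos p.2.1) * Real.cos p.2.2,
   Real.exp (p.1 * Real.sin p.2.1) * Real.sin (p.1 * Real.cos p.2.1) * Real.sin p.2.2)

noncomputable def e3equiv : (Fin 3 → ℝ) ≃ₗ[ℝ] ℝ × ℝ × ℝ where
  toFun f := (f 0, f 1, f 2)
  map_add' := by intros; simp [Prod.ext_iff]
  map_smul' := by intros; simp [Prod.ext_iff]
  invFun x := ![x.1, x.2.1, x.2.2]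
  left_inv f := by funext i; fin_cases i <;> simp
  right_inv x := by simp

noncomputable def b3 : Module.Basis (Fin 3) ℝ (ℝ × ℝ × ℝ) := (Pi.basisFun ℝ (Fin 3)).map e3equiv

lemma clm_det_eq (L : (ℝ × ℝ × ℝ) →L[ℝ] ℝ × ℝ × ℝ) :
    L.det = Matrix.det !![(L (1,0,0)).1, (L (0,1,0)).1, (L (0,0,1)).1;
                          (L (1,0,0)).2.1, (L (0,1,0)).2.1, (L (0,0,1)).2.1;
                          (L (1,0,0)).2.2, (L (0,1,0)).2.2, (L (0,0,1)).2.2] := by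
  show LinearMap.det _ = _
  rw [← LinearMap.det_toMatrix b3]
  congr 1
  ext i j
  fin_cases i <;> fin_cases j <;>
    simp [LinearMap.toMatrix_apply, b3, e3equiv, Pi.single_apply]

lemma jac_det (τ v u : ℝ) :
    (fderiv ℝ (fun p : ℝ × ℝ × ℝ =>
      ((Real.exp (p.1 * Real.sin p.2.1) * Real.cos (p.1 * Real.cos p.2.1),
        Real.exp (p.1 * Real.sin p.2.1) * Real.sin (p.1 * Real.cos p.2.1) * Real.cos p.2.2,
        Real.exp (p.1 * Real.sin p.2.1) * Real.sin (p.1 * Real.cos p.2.1) * Real.sin p.2.2) : ℝ × ℝ × ℝ))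
      (τ, v, u)).det =
    -(Real.exp (τ * Real.sin v) ^ 3 * τ * Real.sin (τ * Real.cos v)) := by
  have h1 : HasFDerivAt (fun p : ℝ × ℝ × ℝ => p.1) (ContinuousLinearMap.fst ℝ ℝ (ℝ × ℝ)) (τ, v, u) := hasFDerivAt_fst
  have h2 : HasFDerivAt (fun p : ℝ × ℝ × ℝ => p.2.1)
      ((ContinuousLinearMap.fst ℝ ℝ ℝ).comp (ContinuousLinearMap.snd ℝ ℝ (ℝ × ℝ))) (τ, v, u) :=
    hasFDerivAt_fst.comp _ hasFDerivAt_snd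
  have h3 : HasFDerivAt (fun p : ℝ × ℝ × ℝ => p.2.2)
      ((ContinuousLinearMap.snd ℝ ℝ ℝ).comp (ContinuousLinearMap.snd ℝ ℝ (ℝ × ℝ))) (τ, v, u) :=
    hasFDerivAt_snd.comp _ hasFDerivAt_snd
  have hsin := (Real.hasDerivAt_sin v).comp_hasFDerivAt (τ, v, u) h2
  have hcos := (Real.hasDerivAt_cos v).comp_hasFDerivAt (τ, v, u) h2
  have hA := h1.mul hsin
  have hB := h1.mul hcos
  have hE := (Real.hasDerivAt_exp (τ * Real.sin v)).comp_hasFDerivAt (τ, v, u) hA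
  have hC := (Real.hasDerivAt_cos (τ * Real.cos v)).comp_hasFDerivAt (τ, v, u) hB
  have hS := (Real.hasDerivAt_sin (τ * Real.cos v)).comp_hasFDerivAt (τ, v, u) hB
  have hcu := (Real.hasDerivAt_cos u).comp_hasFDerivAt (τ, v, u) h3
  have hsu := (Real.hasDerivAt_sin u).comp_hasFDerivAt (τ, v, u) h3
  have hF := HasFDerivAt.prodMk (hE.mul hC) (HasFDerivAt.prodMk ((hE.mul hS).mul hcu) ((hE.mul hS).mul hsu))
  have hF' : HasFDerivAt (fun p : ℝ × ℝ × ℝ =>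
      ((Real.exp (p.1 * Real.sin p.2.1) * Real.cos (p.1 * Real.cos p.2.1),
        Real.exp (p.1 * Real.sin p.2.1) * Real.sin (p.1 * Real.cos p.2.1) * Real.cos p.2.2,
        Real.exp (p.1 * Real.sin p.2.1) * Real.sin (p.1 * Real.cos p.2.1) * Real.sin p.2.2) : ℝ × ℝ × ℝ)) _ (τ, v, u) := hF
  rw [hF'.fderiv, clm_det_eq, Matrix.det_fin_three]
  simp only [ContinuousLinearMap.prod_apply, ContinuousLinearMap.add_apply,
    ContinuousLinearMap.coe_smul', Pi.smul_apply, ContinuousLinearMap.coe_comp',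
    Function.comp_apply, ContinuousLinearMap.coe_fst', ContinuousLinearMap.coe_snd',
    smul_eq_mul]
  norm_num [Matrix.cons_val_zero, Matrix.cons_val_one, Matrix.head_cons,
    Matrix.cons_val_two, Matrix.tail_cons, Matrix.cons_val', Matrix.empty_val',
    Matrix.cons_val_fin_one, Matrix.head_fin_const]
  have e1 := Real.sin_sq_add_cos_sq v
  have e2 := Real.sin_sq_add_cos_sq u
  have e3 := Real.sin_sq_add_cos_sq (τ * Real.cos v)
  set E := Real.exp (τ * Real.sin v)
  set S := Real.sin (τ * Real.cos v)
  set C := Real.cos (τ * Real.cos v)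
  linear_combination (-(E^3 * τ * S) * ((Real.sin v ^ 2 + Real.cos v ^ 2) * (S^2 + C^2))) * e2
    + (-(E^3 * τ * S) * (S^2 + C^2)) * e1 + (-(E^3 * τ * S)) * e3

/-- For all `τ, v, u`, the squared Euclidean norm of `F (τ, v, u)` equals `e^{2τ sin v}`,
and the absolute value of the determinant of the Jacobian (total derivative) of `F` at
`(τ, v, u)` equals `e^{3τ sin v} · |τ| · |sin(τ cos v)|`. -/
theorem normSq_and_jacobian_of_F :
    ∀ τ v u : ℝ,
      (F (τ, v, u)).1 ^ 2 + (F (τ, v, u)).2.1 ^ 2 + (F (τ, v, u)).2.2 ^ 2 =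
        Real.exp (2 * (τ * Real.sin v)) ∧
      |(fderiv ℝ F (τ, v, u)).det| =
        Real.exp (3 * (τ * Real.sin v)) * |τ| * |Real.sin (τ * Real.cos v)| := by
  intro τ v u
  constructor
  · simp only [F]
    rw [two_mul, Real.exp_add]
    have e2 := Real.sin_sq_add_cos_sq u
    have e3 := Real.sin_sq_add_cos_sq (τ * Real.cos v)
    linear_combination (Real.exp (τ * Real.sin v) ^ 2 * Real.sin (τ * Real.cos v) ^ 2) * e2
      + Real.exp (τ * Real.sin v) ^ 2 * e3
  · have hFeq : F = fun p : ℝ × ℝ × ℝ =>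
      ((Real.exp (p.1 * Real.sin p.2.1) * Real.cos (p.1 * Real.cos p.2.1),
        Real.exp (p.1 * Real.sin p.2.1) * Real.sin (p.1 * Real.cos p.2.1) * Real.cos p.2.2,
        Real.exp (p.1 * Real.sin p.2.1) * Real.sin (p.1 * Real.cos p.2.1) * Real.sin p.2.2) : ℝ × ℝ × ℝ) := rfl
    rw [hFeq, jac_det, abs_neg, abs_mul, abs_mul, abs_pow,
      abs_of_pos (Real.exp_pos _)]
    rw [show (3 : ℝ) * (τ * Real.sin v) =
      τ * Real.sin v + (τ * Real.sin v + τ * Real.sin v) by ring, Real.exp_add, Real.exp_add]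
    ring
end

section
/- The map F is injective on the open box (0, π) × (−π/2, π/2) × (−π, π); more precisely, for every ρ with 0 < ρ ≤ π, F is injective on (0, ρ) × (−π/2, π/2) × (−π, π]. -/
open Real Set

lemma F_sq_sum (a b c : ℝ) :
    (Real.exp a * Real.cos b) ^ 2 + (Real.exp a * Real.sin b * Real.cos c) ^ 2 +
      (Real.exp a * Real.sin b * Real.sin c) ^ 2 = Real.exp a ^ 2 := by
  linear_combination (Real.exp a) ^ 2 * (Real.sin b) ^ 2 * Real.sin_sq_add_cos_sq c +
    (Real.exp a) ^ 2 * Real.sin_sq_add_cos_sq b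

lemma F_injOn_aux (ρ : ℝ) (hρ0 : 0 < ρ) (hρπ : ρ ≤ π) :
    Set.InjOn F (Ioo 0 ρ ×ˢ Ioo (-(π/2)) (π/2) ×ˢ Ioc (-π) π) := by
  rintro ⟨τ, v, u⟩ ⟨hτ, hv, hu⟩ ⟨τ', v', u'⟩ ⟨hτ', hv', hu'⟩ h
  simp only [F, Prod.mk.injEq] at h
  obtain ⟨hx, hy, hz⟩ := h
  simp only [mem_Ioo, mem_Ioc] at hτ hv hu hτ' hv' hu'
  -- positivity facts
  have hcv : 0 < Real.cos v := Real.cos_pos_of_mem_Ioo ⟨by linarith [hv.1], hv.2⟩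
  have hcv' : 0 < Real.cos v' := Real.cos_pos_of_mem_Ioo ⟨by linarith [hv'.1], hv'.2⟩
  have hθ0 : 0 < τ * Real.cos v := mul_pos hτ.1 hcv
  have hθ0' : 0 < τ' * Real.cos v' := mul_pos hτ'.1 hcv'
  have hθπ : τ * Real.cos v < π := by
    have := Real.cos_le_one v
    nlinarith [hτ.1, hτ.2]
  have hθπ' : τ' * Real.cos v' < π := by
    have := Real.cos_le_one v'
    nlinarith [hτ'.1, hτ'.2]
  -- step 1: exponents equal
  have hsq : Real.exp (τ * Real.sin v) ^ 2 = Real.exp (τ' * Real.sin v') ^ 2 := by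
    rw [← F_sq_sum (τ * Real.sin v) (τ * Real.cos v) u,
      ← F_sq_sum (τ' * Real.sin v') (τ' * Real.cos v') u', hx, hy, hz]
  have hr : τ * Real.sin v = τ' * Real.sin v' := by
    have h2 : τ * Real.sin v + τ * Real.sin v = τ' * Real.sin v' + τ' * Real.sin v' :=
      Real.exp_injective (by rw [Real.exp_add, Real.exp_add, ← sq, ← sq, hsq])
    linarith
  have hexp : Real.exp (τ * Real.sin v) = Real.exp (τ' * Real.sin v') := by rw [hr]
  -- step 2: cos θ = cos θ' hence θ = θ'
  have hcosθ : Real.cos (τ * Real.cos v) = Real.cos (τ' * Real.cos v') := by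
    rw [hexp] at hx
    exact mul_left_cancel₀ (Real.exp_ne_zero _) hx
  have hθ : τ * Real.cos v = τ' * Real.cos v' :=
    Real.injOn_cos ⟨le_of_lt hθ0, le_of_lt hθπ⟩ ⟨le_of_lt hθ0', le_of_lt hθπ'⟩ hcosθ
  -- step 3: sin θ > 0, so cos u = cos u', sin u = sin u'
  have hsθ : 0 < Real.sin (τ * Real.cos v) := Real.sin_pos_of_pos_of_lt_pi hθ0 hθπ
  have hne : Real.exp (τ * Real.sin v) * Real.sin (τ * Real.cos v) ≠ 0 :=
    mul_ne_zero (Real.exp_ne_zero _) (ne_of_gt hsθ)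
  rw [← hexp, ← hθ] at hy hz
  have hcu : Real.cos u = Real.cos u' := mul_left_cancel₀ hne hy
  have hsu : Real.sin u = Real.sin u' := mul_left_cancel₀ hne hz
  have huu : u = u' := by
    have h1 : Real.cos (u - u') = 1 := by
      rw [Real.cos_sub, hcu, hsu]
      linear_combination Real.sin_sq_add_cos_sq u'
    have h2 : u - u' = 0 := by
      rw [Real.cos_eq_one_iff_of_lt_of_lt (by linarith [hu.1, hu'.2, Real.pi_pos])
        (by linarith [hu.2, hu'.1, Real.pi_pos])] at h1
      exact h1
    linarith
  -- step 4: τ = τ'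
  have hττ : τ = τ' := by
    have hτsq : τ ^ 2 = τ' ^ 2 := by
      have e1 : (τ * Real.sin v) ^ 2 + (τ * Real.cos v) ^ 2 = τ ^ 2 := by
        linear_combination τ ^ 2 * Real.sin_sq_add_cos_sq v
      have e2 : (τ' * Real.sin v') ^ 2 + (τ' * Real.cos v') ^ 2 = τ' ^ 2 := by
        linear_combination τ' ^ 2 * Real.sin_sq_add_cos_sq v'
      rw [← e1, ← e2, hr, hθ]
    have hmul : (τ - τ') * (τ + τ') = 0 := by linear_combination hτsq
    rcases mul_eq_zero.mp hmul with h | h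
    · linarith
    · linarith [hτ.1, hτ'.1]
  -- step 5: v = v'
  have hvv : v = v' := by
    have hsv : Real.sin v = Real.sin v' := by
      rw [hττ] at hr
      exact mul_left_cancel₀ (ne_of_gt hτ'.1) hr
    exact Real.injOn_sin ⟨le_of_lt hv.1, le_of_lt hv.2⟩ ⟨le_of_lt hv'.1, le_of_lt hv'.2⟩ hsv
  exact Prod.ext hττ (Prod.ext hvv huu)

/-- `F` is injective on the open box `(0, π) × (−π/2, π/2) × (−π, π)`; more precisely,
for every `ρ` with `0 < ρ ≤ π`, `F` is injective on `(0, ρ) × (−π/2, π/2) × (−π, π]`. -/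
theorem F_injOn_box :
    Set.InjOn F (Ioo 0 π ×ˢ Ioo (-(π/2)) (π/2) ×ˢ Ioo (-π) π) ∧
    ∀ ρ : ℝ, 0 < ρ → ρ ≤ π →
      Set.InjOn F (Ioo 0 ρ ×ˢ Ioo (-(π/2)) (π/2) ×ˢ Ioc (-π) π) := by
  refine ⟨?_, fun ρ h0 hπ => F_injOn_aux ρ h0 hπ⟩
  exact (F_injOn_aux π Real.pi_pos le_rfl).mono
    (Set.prod_mono_right (Set.prod_mono_right Set.Ioo_subset_Ioc_self))
end
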